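/- arXiv:2412.08727 — 2 statements merged into one kernel-verified Lean document; each statement's English description precedes it below -/
import Mathlib

section
/- Let (Ωᵢ, Pᵢ) be probability spaces and Nᵢ : Ωᵢ → ℕ random variables. If for every r ∈ ℕ the r-th factorial moments E[(Nᵢ)ᵣ] converge to λ^r as i → ∞, where λ > 0, then for every n ∈ ℕ, Pᵢ(Nᵢ = n) → λ^n e^{-λ}/n! as i → ∞. -/
open MeasureTheory Real Filter

/-- Partial alternating sum of binomial coefficients. -/
lemma mm_alt_sum (m : ℕ) : ∀ M : ℕ, 1 ≤ M →
    ∑ k ∈ Finset.range M, (-1:ℝ)^k * ((m+1).choose k : ℝ)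
      = (-1:ℝ)^(M-1) * (m.choose (M-1) : ℝ) := by
  intro M
  induction M with
  | zero => omega
  | succ M ih =>
    intro _
    rcases Nat.eq_zero_or_pos M with h0 | h1
    · subst h0; simp
    · obtain ⟨M', rfl⟩ : ∃ M', M = M' + 1 := ⟨M - 1, by omega⟩
      rw [Finset.sum_range_succ, ih (by omega)]
      simp only [Nat.add_sub_cancel, Nat.choose_succ_succ]
      push_cast
      ring

lemma mm_div_eq (Nv n k : ℕ) :
    (Nv.descFactorial (n+k) : ℝ) / ((n.factorial : ℝ) * (k.factorial : ℝ))
      = (Nv.choose n : ℝ) * ((Nv - n).choose k : ℝ) := by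
  have h : (Nv - n).descFactorial ((n+k) - n) * Nv.descFactorial n = Nv.descFactorial (n+k) :=
    Nat.descFactorial_mul_descFactorial (Nat.le_add_right n k)
  rw [← h, Nat.add_sub_cancel_left, Nat.descFactorial_eq_factorial_mul_choose,
    Nat.descFactorial_eq_factorial_mul_choose]
  have h1 : (n.factorial : ℝ) ≠ 0 := by exact_mod_cast n.factorial_ne_zero
  have h2 : (k.factorial : ℝ) ≠ 0 := by exact_mod_cast k.factorial_ne_zero
  push_cast
  field_simp

lemma mm_term_eq (Nv n k : ℕ) :
    ((-1:ℝ)^k / ((n.factorial : ℝ) * (k.factorial : ℝ))) * (Nv.descFactorial (n+k) : ℝ)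
      = (-1:ℝ)^k * ((Nv.choose n : ℝ) * ((Nv - n).choose k : ℝ)) := by
  rw [div_mul_eq_mul_div, mul_div_assoc, mm_div_eq]

/-- Bonferroni-type pointwise bound. -/
lemma mm_pointwise (Nv n M : ℕ) (hM : 1 ≤ M) :
    |(if Nv = n then (1:ℝ) else 0)
        - ∑ k ∈ Finset.range M,
            ((-1:ℝ)^k / ((n.factorial : ℝ) * (k.factorial : ℝ))) * (Nv.descFactorial (n+k) : ℝ)|
      ≤ (Nv.descFactorial (n+M) : ℝ) / ((n.factorial : ℝ) * (M.factorial : ℝ)) := by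
  rw [mm_div_eq]
  simp only [mm_term_eq]
  rcases lt_trichotomy Nv n with hlt | rfl | hgt
  · rw [if_neg (by omega)]
    rw [Nat.choose_eq_zero_of_lt hlt]
    simp
  · rw [if_pos rfl]
    rw [Finset.sum_eq_single 0]
    · simp
    · intro k _ hk
      rw [Nat.sub_self, Nat.choose_eq_zero_of_lt (show (0:ℕ) < k by omega)]
      ring
    · intro h; exact absurd (Finset.mem_range.mpr (by omega)) h
  · rw [if_neg (by omega)]
    obtain ⟨m, hm⟩ : ∃ m, Nv - n = m + 1 := ⟨Nv - n - 1, by omega⟩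
    rw [hm]
    have hsum : ∑ k ∈ Finset.range M,
        (-1:ℝ)^k * ((Nv.choose n : ℝ) * (((m+1).choose k : ℝ)))
        = (Nv.choose n : ℝ) * ((-1:ℝ)^(M-1) * (m.choose (M-1) : ℝ)) := by
      rw [← mm_alt_sum m M hM, Finset.mul_sum]
      apply Finset.sum_congr rfl
      intro k _; ring
    rw [hsum]
    rw [abs_sub_comm, sub_zero, abs_mul, abs_mul, Nat.abs_cast, Nat.abs_cast,
      abs_pow, abs_neg, abs_one, one_pow, one_mul]
    have hle : (m.choose (M-1) : ℝ) ≤ ((m+1).choose M : ℝ) := by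
      obtain ⟨M', rfl⟩ : ∃ M', M = M' + 1 := ⟨M - 1, by omega⟩
      rw [Nat.add_sub_cancel, Nat.choose_succ_succ]
      exact_mod_cast Nat.le_add_right _ _
    exact mul_le_mul_of_nonneg_left hle (by positivity)

lemma mm_desc_mono (Nv r s : ℕ) (h : r ≤ s) :
    (Nv.descFactorial r : ℝ) ≤ (Nv.descFactorial s : ℝ) + (s^s : ℕ) := by
  rcases lt_or_ge Nv s with hlt | hle
  · have h1 : Nv.descFactorial r ≤ Nv ^ r := Nat.descFactorial_le_pow Nv r
    have h2 : Nv ^ r ≤ s ^ s := by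
      calc Nv ^ r ≤ s ^ r := Nat.pow_le_pow_left (le_of_lt hlt) r
        _ ≤ s ^ s := Nat.pow_le_pow_right (by omega) h
    have : Nv.descFactorial r ≤ s ^ s := le_trans h1 h2
    have h0 : (0:ℝ) ≤ (Nv.descFactorial s : ℝ) := by positivity
    have := (Nat.cast_le (α := ℝ)).mpr this
    linarith
  · have hd : (Nv - r).descFactorial (s - r) * Nv.descFactorial r = Nv.descFactorial s :=
      Nat.descFactorial_mul_descFactorial h
    have hpos : 1 ≤ (Nv - r).descFactorial (s - r) := by
      rw [Nat.one_le_iff_ne_zero]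
      intro h0
      rw [Nat.descFactorial_eq_zero_iff_lt] at h0
      omega
    have : Nv.descFactorial r ≤ Nv.descFactorial s := by
      calc Nv.descFactorial r = 1 * Nv.descFactorial r := (one_mul _).symm
        _ ≤ (Nv - r).descFactorial (s - r) * Nv.descFactorial r :=
            Nat.mul_le_mul_right _ hpos
        _ = Nv.descFactorial s := hd
    have := (Nat.cast_le (α := ℝ)).mpr this
    have h0 : (0:ℝ) ≤ ((s^s : ℕ) : ℝ) := by positivity
    linarith

/-- One-dimensional method of moments for Poisson convergence. -/
theorem method_of_moments_one_dim
    {Ω : ℕ → Type*} [∀ i, MeasurableSpace (Ω i)]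
    (P : ∀ i, Measure (Ω i)) [∀ i, IsProbabilityMeasure (P i)]
    (N : ∀ i, Ω i → ℕ) (hN : ∀ i, Measurable (N i))
    (lam : ℝ) (hlam : 0 < lam)
    (hmom : ∀ r : ℕ,
      Tendsto (fun i => ∫ ω, (Nat.descFactorial (N i ω) r : ℝ) ∂(P i))
        atTop (nhds (lam ^ r))) :
    ∀ n : ℕ,
      Tendsto (fun i => ((P i) {ω | N i ω = n}).toReal) atTop
        (nhds (lam ^ n * Real.exp (-lam) / Nat.factorial n)) := by
  intro n
  have hnf : (0:ℝ) < (n.factorial : ℝ) := by exact_mod_cast n.factorial_pos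
  rw [Metric.tendsto_atTop]
  intro ε hε
  set L : ℝ := lam ^ n * Real.exp (-lam) / (n.factorial : ℝ) with hLdef
  -- partial sums of the Poisson series tend to L
  have hexp : HasSum (fun k : ℕ => (-lam)^k / (k.factorial : ℝ)) (Real.exp (-lam)) := by
    rw [Real.exp_eq_exp_ℝ]
    exact NormedSpace.expSeries_div_hasSum_exp (-lam)
  have hS : Tendsto (fun M : ℕ => ∑ k ∈ Finset.range M,
      ((-1:ℝ)^k / ((n.factorial:ℝ) * (k.factorial:ℝ))) * lam^(n+k)) atTop (nhds L) := by
    have h2 : Tendsto (fun M : ℕ => (lam^n / (n.factorial:ℝ)) *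
        ∑ k ∈ Finset.range M, (-lam)^k / (k.factorial : ℝ)) atTop
        (nhds ((lam^n / (n.factorial:ℝ)) * Real.exp (-lam))) :=
      hexp.tendsto_sum_nat.const_mul _
    have heq : ∀ M : ℕ, (lam^n / (n.factorial:ℝ)) *
        ∑ k ∈ Finset.range M, (-lam)^k / (k.factorial : ℝ)
        = ∑ k ∈ Finset.range M,
          ((-1:ℝ)^k / ((n.factorial:ℝ)*(k.factorial:ℝ))) * lam^(n+k) := by
      intro M
      rw [Finset.mul_sum]
      apply Finset.sum_congr rfl
      intro k _
      rw [neg_pow, pow_add]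
      ring
    simp only [heq] at h2
    have hLe : L = (lam^n / (n.factorial:ℝ)) * Real.exp (-lam) := by rw [hLdef]; ring
    rw [hLe]
    exact h2
  have hA : Tendsto (fun M : ℕ => lam^(n+M) / ((n.factorial:ℝ) * (M.factorial:ℝ)))
      atTop (nhds 0) := by
    have h1 := FloorSemiring.tendsto_pow_div_factorial_atTop (K := ℝ) lam
    have h2 := h1.const_mul (lam^n / (n.factorial:ℝ))
    rw [mul_zero] at h2
    have heq : ∀ M : ℕ, (lam^n/(n.factorial:ℝ)) * (lam^M / (M.factorial:ℝ))
        = lam^(n+M)/((n.factorial:ℝ)*(M.factorial:ℝ)) := by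
      intro M; rw [pow_add]; ring
    simp only [heq] at h2
    exact h2
  -- choose M
  have e1 : ∀ᶠ M : ℕ in atTop, |(∑ k ∈ Finset.range M,
      ((-1:ℝ)^k / ((n.factorial:ℝ)*(k.factorial:ℝ))) * lam^(n+k)) - L| < ε/4 := by
    obtain ⟨M0, h⟩ := Metric.tendsto_atTop.mp hS (ε/4) (by linarith)
    exact eventually_atTop.mpr ⟨M0, fun M hM => by
      have := h M hM; rwa [Real.dist_eq] at this⟩
  have e2 : ∀ᶠ M : ℕ in atTop,
      lam^(n+M)/((n.factorial:ℝ)*(M.factorial:ℝ)) < ε/4 := by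
    obtain ⟨M0, h⟩ := Metric.tendsto_atTop.mp hA (ε/4) (by linarith)
    refine eventually_atTop.mpr ⟨M0, fun M hM => ?_⟩
    have := h M hM
    rw [Real.dist_eq, sub_zero] at this
    exact lt_of_le_of_lt (le_abs_self _) this
  obtain ⟨M, hM1, hMS, hMA⟩ := ((eventually_ge_atTop 1).and (e1.and e2)).exists
  have hMf : (0:ℝ) < (M.factorial : ℝ) := by exact_mod_cast M.factorial_pos
  have hMpos : (0:ℝ) < (M:ℝ) := by exact_mod_cast hM1
  -- eventual control of moments
  have key : ∀ (r : ℕ) (δ : ℝ), 0 < δ → ∀ᶠ i in atTop,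
      |(∫ ω, ((N i ω).descFactorial r : ℝ) ∂(P i)) - lam^r| < δ := by
    intro r δ hδ
    obtain ⟨i0, h⟩ := Metric.tendsto_atTop.mp (hmom r) δ hδ
    exact eventually_atTop.mpr ⟨i0, fun i hi => by
      have := h i hi; rwa [Real.dist_eq] at this⟩
  have hδk : (0:ℝ) < ε/(4*M) := div_pos hε (by linarith)
  have hδM : (0:ℝ) < min (ε/4 * ((n.factorial:ℝ)*(M.factorial:ℝ))) (lam^(n+M)) :=
    lt_min (by positivity) (by positivity)
  have ev1 : ∀ᶠ i in atTop, ∀ k ∈ Finset.range M,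
      |(∫ ω, ((N i ω).descFactorial (n+k) : ℝ) ∂(P i)) - lam^(n+k)| < ε/(4*M) := by
    rw [Filter.eventually_all_finset]
    intro k _
    exact key (n+k) _ hδk
  have ev2 := key (n+M) _ hδM
  obtain ⟨i0, hi0⟩ := eventually_atTop.mp (ev1.and ev2)
  refine ⟨i0, fun i hi => ?_⟩
  obtain ⟨h1, h2⟩ := hi0 i hi
  -- per-i analysis
  have hmeas : ∀ r : ℕ, Measurable (fun ω => ((N i ω).descFactorial r : ℝ)) :=
    fun r => (measurable_from_nat (f := fun x : ℕ => ((x.descFactorial r : ℕ) : ℝ))).comp (hN i)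
  have hint_top : Integrable (fun ω => ((N i ω).descFactorial (n+M) : ℝ)) (P i) := by
    by_contra hcon
    rw [integral_undef hcon, zero_sub, abs_neg, abs_of_pos (by positivity)] at h2
    exact absurd (lt_of_lt_of_le h2 (min_le_right _ _)) (lt_irrefl _)
  have hint : ∀ k, k ≤ M →
      Integrable (fun ω => ((N i ω).descFactorial (n+k) : ℝ)) (P i) := by
    intro k hk
    refine Integrable.mono
      (hint_top.add (integrable_const ((((n+M)^(n+M) : ℕ) : ℝ))))
      ((hmeas (n+k)).aestronglyMeasurable) ?_
    refine Filter.Eventually.of_forall (fun ω => ?_)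
    have hb := mm_desc_mono (N i ω) (n+k) (n+M) (by omega)
    have ha : (0:ℝ) ≤ ((N i ω).descFactorial (n+k) : ℝ) := by positivity
    have h0 : (0:ℝ) ≤ ((N i ω).descFactorial (n+M) : ℝ) + (((n+M)^(n+M) : ℕ) : ℝ) := by
      positivity
    simp only [Pi.add_apply, Real.norm_eq_abs]
    rw [abs_of_nonneg ha, abs_of_nonneg h0]
    exact hb
  have hsmeas : MeasurableSet {ω | N i ω = n} := hN i (measurableSet_singleton n)
  have hg_int : Integrable (fun ω => ∑ k ∈ Finset.range M,
      ((-1:ℝ)^k / ((n.factorial:ℝ)*(k.factorial:ℝ))) * ((N i ω).descFactorial (n+k) : ℝ))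
      (P i) := by
    apply integrable_finset_sum
    intro k hk
    exact (hint k (le_of_lt (Finset.mem_range.mp hk))).const_mul _
  have hind_int : Integrable ({ω | N i ω = n}.indicator (fun _ => (1:ℝ))) (P i) :=
    (integrable_const (1:ℝ)).indicator hsmeas
  have hbound_int : Integrable
      (fun ω => ((N i ω).descFactorial (n+M) : ℝ) / ((n.factorial:ℝ)*(M.factorial:ℝ)))
      (P i) := hint_top.div_const _
  have hgval : ∫ ω, (∑ k ∈ Finset.range M,
      ((-1:ℝ)^k / ((n.factorial:ℝ)*(k.factorial:ℝ))) * ((N i ω).descFactorial (n+k) : ℝ)) ∂(P i)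
      = ∑ k ∈ Finset.range M, ((-1:ℝ)^k / ((n.factorial:ℝ)*(k.factorial:ℝ))) *
          (∫ ω, ((N i ω).descFactorial (n+k) : ℝ) ∂(P i)) := by
    rw [integral_finset_sum _ (fun k hk =>
      (hint k (le_of_lt (Finset.mem_range.mp hk))).const_mul _)]
    apply Finset.sum_congr rfl
    intro k _
    exact integral_const_mul _ _
  have hindval : ∫ ω, {ω | N i ω = n}.indicator (fun _ => (1:ℝ)) ω ∂(P i)
      = ((P i) {ω | N i ω = n}).toReal := integral_indicator_one hsmeas
  -- key1 : the Bonferroni bound after integration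
  have key1 : |((P i) {ω | N i ω = n}).toReal - ∫ ω, (∑ k ∈ Finset.range M,
      ((-1:ℝ)^k / ((n.factorial:ℝ)*(k.factorial:ℝ))) * ((N i ω).descFactorial (n+k) : ℝ)) ∂(P i)|
      ≤ (∫ ω, ((N i ω).descFactorial (n+M) : ℝ) ∂(P i)) / ((n.factorial:ℝ)*(M.factorial:ℝ)) := by
    rw [← hindval, ← integral_sub hind_int hg_int, ← integral_div]
    calc |∫ ω, ({ω | N i ω = n}.indicator (fun _ => (1:ℝ)) ω - ∑ k ∈ Finset.range M,
          ((-1:ℝ)^k / ((n.factorial:ℝ)*(k.factorial:ℝ))) * ((N i ω).descFactorial (n+k) : ℝ)) ∂(P i)|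
        ≤ ∫ ω, |{ω | N i ω = n}.indicator (fun _ => (1:ℝ)) ω - ∑ k ∈ Finset.range M,
          ((-1:ℝ)^k / ((n.factorial:ℝ)*(k.factorial:ℝ))) * ((N i ω).descFactorial (n+k) : ℝ)| ∂(P i) := by
          simpa [Real.norm_eq_abs] using norm_integral_le_integral_norm (μ := P i)
            (fun ω => {ω | N i ω = n}.indicator (fun _ => (1:ℝ)) ω - ∑ k ∈ Finset.range M,
              ((-1:ℝ)^k / ((n.factorial:ℝ)*(k.factorial:ℝ))) * ((N i ω).descFactorial (n+k) : ℝ))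
      _ ≤ ∫ ω, ((N i ω).descFactorial (n+M) : ℝ) / ((n.factorial:ℝ)*(M.factorial:ℝ)) ∂(P i) := by
          refine integral_mono (hind_int.sub hg_int).abs hbound_int (fun ω => ?_)
          have hp := mm_pointwise (N i ω) n M hM1
          by_cases h : N i ω = n
          · have hmem : ω ∈ {ω | N i ω = n} := h
            rw [if_pos h] at hp
            rw [Set.indicator_of_mem hmem]
            exact hp
          · have hmem : ω ∉ {ω | N i ω = n} := h
            rw [if_neg h] at hp
            rw [Set.indicator_of_notMem hmem]
            exact hp
  -- key2 : integral of the partial sum is close to partial Poisson sum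
  have key2 : |(∑ k ∈ Finset.range M, ((-1:ℝ)^k / ((n.factorial:ℝ)*(k.factorial:ℝ))) *
        (∫ ω, ((N i ω).descFactorial (n+k) : ℝ) ∂(P i)))
      - ∑ k ∈ Finset.range M,
        ((-1:ℝ)^k / ((n.factorial:ℝ)*(k.factorial:ℝ))) * lam^(n+k)| < ε/4 := by
    rw [← Finset.sum_sub_distrib]
    have hstep : ∀ k ∈ Finset.range M,
        |((-1:ℝ)^k / ((n.factorial:ℝ)*(k.factorial:ℝ))) *
            (∫ ω, ((N i ω).descFactorial (n+k) : ℝ) ∂(P i))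
          - ((-1:ℝ)^k / ((n.factorial:ℝ)*(k.factorial:ℝ))) * lam^(n+k)| < ε/(4*M) := by
      intro k hk
      rw [← mul_sub, abs_mul]
      have hkf : (0:ℝ) < (k.factorial : ℝ) := by exact_mod_cast k.factorial_pos
      have hc : |(-1:ℝ)^k / ((n.factorial:ℝ)*(k.factorial:ℝ))| ≤ 1 := by
        rw [abs_div, abs_pow, abs_neg, abs_one, one_pow, abs_of_pos (by positivity)]
        rw [div_le_one (by positivity)]
        have hn1 : (1:ℝ) ≤ (n.factorial : ℝ) := by exact_mod_cast n.factorial_pos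
        have hk1 : (1:ℝ) ≤ (k.factorial : ℝ) := by exact_mod_cast k.factorial_pos
        nlinarith
      have habs := h1 k hk
      calc |(-1:ℝ)^k / ((n.factorial:ℝ)*(k.factorial:ℝ))| *
            |(∫ ω, ((N i ω).descFactorial (n+k) : ℝ) ∂(P i)) - lam^(n+k)|
          ≤ 1 * |(∫ ω, ((N i ω).descFactorial (n+k) : ℝ) ∂(P i)) - lam^(n+k)| :=
            mul_le_mul_of_nonneg_right hc (abs_nonneg _)
        _ < ε/(4*M) := by rw [one_mul]; exact habs
    calc |∑ k ∈ Finset.range M,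
          (((-1:ℝ)^k / ((n.factorial:ℝ)*(k.factorial:ℝ))) *
            (∫ ω, ((N i ω).descFactorial (n+k) : ℝ) ∂(P i))
          - ((-1:ℝ)^k / ((n.factorial:ℝ)*(k.factorial:ℝ))) * lam^(n+k))|
        ≤ ∑ k ∈ Finset.range M,
          |((-1:ℝ)^k / ((n.factorial:ℝ)*(k.factorial:ℝ))) *
            (∫ ω, ((N i ω).descFactorial (n+k) : ℝ) ∂(P i))
          - ((-1:ℝ)^k / ((n.factorial:ℝ)*(k.factorial:ℝ))) * lam^(n+k)| :=
          Finset.abs_sum_le_sum_abs _ _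
      _ < ∑ _k ∈ Finset.range M, ε/(4*M) :=
          Finset.sum_lt_sum_of_nonempty (by
            rw [Finset.nonempty_range_iff]; omega) hstep
      _ = ε/4 := by
          rw [Finset.sum_const, Finset.card_range, nsmul_eq_mul]
          field_simp
  -- key3 : the remainder bound
  have key3 : (∫ ω, ((N i ω).descFactorial (n+M) : ℝ) ∂(P i)) /
      ((n.factorial:ℝ)*(M.factorial:ℝ)) < ε/2 := by
    have hlt : (∫ ω, ((N i ω).descFactorial (n+M) : ℝ) ∂(P i))
        < lam^(n+M) + ε/4 * ((n.factorial:ℝ)*(M.factorial:ℝ)) := by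
      have := lt_of_lt_of_le h2 (min_le_left _ _)
      have := abs_lt.mp this
      linarith [this.2]
    rw [div_lt_iff₀ (by positivity)]
    have : lam^(n+M) < ε/4 * ((n.factorial:ℝ)*(M.factorial:ℝ)) := by
      rw [div_lt_iff₀ (by positivity)] at hMA
      linarith
    nlinarith
  -- combine
  rw [Real.dist_eq]
  have hb1 : |((P i) {ω | N i ω = n}).toReal - ∑ k ∈ Finset.range M,
      ((-1:ℝ)^k / ((n.factorial:ℝ)*(k.factorial:ℝ))) *
        (∫ ω, ((N i ω).descFactorial (n+k) : ℝ) ∂(P i))| < ε/2 := by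
    rw [← hgval]
    exact lt_of_le_of_lt key1 key3
  have t1 : |((P i) {ω | N i ω = n}).toReal - L|
      ≤ |((P i) {ω | N i ω = n}).toReal - ∑ k ∈ Finset.range M,
          ((-1:ℝ)^k / ((n.factorial:ℝ)*(k.factorial:ℝ))) * lam^(n+k)|
        + |(∑ k ∈ Finset.range M,
            ((-1:ℝ)^k / ((n.factorial:ℝ)*(k.factorial:ℝ))) * lam^(n+k)) - L| :=
    abs_sub_le _ _ _
  have t2 : |((P i) {ω | N i ω = n}).toReal - ∑ k ∈ Finset.range M,
        ((-1:ℝ)^k / ((n.factorial:ℝ)*(k.factorial:ℝ))) * lam^(n+k)|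
      ≤ |((P i) {ω | N i ω = n}).toReal - ∑ k ∈ Finset.range M,
          ((-1:ℝ)^k / ((n.factorial:ℝ)*(k.factorial:ℝ))) *
            (∫ ω, ((N i ω).descFactorial (n+k) : ℝ) ∂(P i))|
        + |(∑ k ∈ Finset.range M, ((-1:ℝ)^k / ((n.factorial:ℝ)*(k.factorial:ℝ))) *
            (∫ ω, ((N i ω).descFactorial (n+k) : ℝ) ∂(P i)))
          - ∑ k ∈ Finset.range M,
            ((-1:ℝ)^k / ((n.factorial:ℝ)*(k.factorial:ℝ))) * lam^(n+k)| :=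
    abs_sub_le _ _ _
  linarith
end

section
/- Let (Ωᵢ, Pᵢ) be probability spaces and for each i let N_{1,i},…,N_{k,i} : Ωᵢ → ℕ be random variables. Suppose there exist λ₁,…,λ_k > 0 such that for all r₁,…,r_k ∈ ℕ, E[(N_{1,i})_{r₁}⋯(N_{k,i})_{r_k}] → λ₁^{r₁}⋯λ_k^{r_k} as i → ∞. Then for all n₁,…,n_k ∈ ℕ, Pᵢ(N_{1,i} = n₁,…,N_{k,i} = n_k) → ∏ⱼ λⱼ^{nⱼ} e^{-λⱼ}/nⱼ!. -/
open MeasureTheory Filter Real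

open Finset

open Finset

/-- Closed form for the alternating inclusion–exclusion sum. -/
lemma sum_alt_choose (Nv n : ℕ) :
    ∀ M, n ≤ M →
    (∑ r ∈ Finset.Icc n M, (-1:ℤ)^(r-n) * (r.choose n) * (Nv.choose r))
      = (if Nv = n then 1 else 0) +
        (-1:ℤ)^(M-n) * (if Nv ≤ n then 0 else (Nv.choose n : ℤ) * ((Nv-1-n).choose (M-n) : ℤ)) := by
  intro M
  induction M with
  | zero =>
    intro h
    interval_cases n
    simp only [Finset.Icc_self, Finset.sum_singleton, Nat.sub_self, pow_zero, one_mul,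
      Nat.choose_zero_right, Nat.cast_one]
    rcases Nat.eq_zero_or_pos Nv with h0 | h0
    · simp [h0]
    · have h1 : ¬ Nv = 0 := by omega
      have h2 : ¬ Nv ≤ 0 := by omega
      simp [h1, h2, Nat.choose_zero_right, Nat.choose_self]
  | succ M ih =>
    intro h
    rcases eq_or_lt_of_le h with hb | hlt
    · rw [← hb, Finset.Icc_self, Finset.sum_singleton, Nat.sub_self, pow_zero, Nat.choose_self]
      rcases lt_trichotomy Nv n with hc | hc | hc
      · have h1 : ¬ Nv = n := by omega
        have h2 : Nv ≤ n := by omega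
        simp [h1, h2, Nat.choose_eq_zero_of_lt hc]
      · simp [hc, Nat.choose_self]
      · have h1 : ¬ Nv = n := by omega
        have h2 : ¬ Nv ≤ n := by omega
        simp [h1, h2]
    · have hM : n ≤ M := by omega
      rw [Finset.sum_Icc_succ_top h, ih hM]
      have key : ((M+1).choose n : ℤ) * (Nv.choose (M+1) : ℤ)
          = (if Nv ≤ n then 0 else (Nv.choose n : ℤ) * ((Nv-1-n).choose (M-n) : ℤ))
            + (if Nv ≤ n then 0 else (Nv.choose n : ℤ) * ((Nv-1-n).choose (M+1-n) : ℤ)) := by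
        by_cases hc : Nv ≤ n
        · have : Nv < M + 1 := by omega
          simp [hc, Nat.choose_eq_zero_of_lt this]
        · simp only [hc, if_false]
          push_neg at hc
          have hkey : (M+1).choose n * Nv.choose (M+1) = Nv.choose n * ((Nv-n).choose (M+1-n)) := by
            rcases le_or_gt (M+1) Nv with hle | hgt
            · rw [mul_comm]
              exact Nat.choose_mul (n := Nv) (k := M+1) (s := n) (by omega)
            · simp [Nat.choose_eq_zero_of_lt hgt,
                Nat.choose_eq_zero_of_lt (show Nv - n < M+1-n by omega)]
          have h1 : Nv - n = (Nv - 1 - n) + 1 := by omega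
          have h2 : M + 1 - n = (M - n) + 1 := by omega
          rw [h1, h2, Nat.choose_succ_succ] at hkey
          have := congrArg (fun x : ℕ => (x : ℤ)) hkey
          push_cast at this ⊢
          rw [h2]
          push_cast
          linarith [this]
      have hpow : (-1:ℤ)^(M+1-n) = -(-1:ℤ)^(M-n) := by
        rw [show M+1-n = (M-n)+1 from by omega, pow_succ]
        ring
      rw [hpow]
      linear_combination (-(-1:ℤ)^(M-n)) * key

/-- Bonferroni-type bound: the truncated alternating sum differs from the
indicator by at most the next term. -/
lemma abs_sum_alt_choose_le (Nv n M : ℕ) (h : n ≤ M) :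
    |(∑ r ∈ Finset.Icc n M, (-1:ℤ)^(r-n) * (r.choose n) * (Nv.choose r))
        - (if Nv = n then 1 else 0)|
      ≤ ((M+1).choose n : ℤ) * (Nv.choose (M+1) : ℤ) := by
  rw [sum_alt_choose Nv n M h]
  rw [add_sub_cancel_left, abs_mul, abs_pow, abs_neg, abs_one, one_pow, one_mul]
  by_cases hc : Nv ≤ n
  · simp [hc, Nat.choose_eq_zero_of_lt (show Nv < M + 1 by omega)]
  · simp only [hc, if_false]
    push_neg at hc
    have hb : Nv.choose n * ((Nv-1-n).choose (M-n)) ≤ (M+1).choose n * Nv.choose (M+1) := by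
      have hkey : (M+1).choose n * Nv.choose (M+1) = Nv.choose n * ((Nv-n).choose (M+1-n)) := by
        rcases le_or_gt (M+1) Nv with hle | hgt
        · rw [mul_comm]
          exact Nat.choose_mul (n := Nv) (k := M+1) (s := n) (by omega)
        · simp [Nat.choose_eq_zero_of_lt hgt,
            Nat.choose_eq_zero_of_lt (show Nv - n < M+1-n by omega)]
      rw [hkey]
      apply Nat.mul_le_mul_left
      have h1 : Nv - n = (Nv - 1 - n) + 1 := by omega
      have h2 : M + 1 - n = (M - n) + 1 := by omega
      rw [h1, h2, Nat.choose_succ_succ]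
      exact Nat.le_add_right _ _
    calc |((Nv.choose n : ℤ) * ((Nv-1-n).choose (M-n) : ℤ))|
        = ((Nv.choose n * ((Nv-1-n).choose (M-n)) : ℕ) : ℤ) := by
          push_cast; rw [abs_of_nonneg]; positivity
      _ ≤ (((M+1).choose n * Nv.choose (M+1) : ℕ) : ℤ) := by exact_mod_cast hb
      _ = _ := by push_cast; ring

/-- Real version, with descending factorials. -/
lemma abs_sum_alt_descFactorial_le (Nv n M : ℕ) (h : n ≤ M) :
    |(if Nv = n then (1:ℝ) else 0) -
        (∑ r ∈ Finset.Icc n M,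
          (-1:ℝ)^(r-n) * (r.choose n) * (Nv.descFactorial r : ℝ) / (r.factorial : ℝ))|
      ≤ ((M+1).choose n : ℝ) * (Nv.descFactorial (M+1) : ℝ) / ((M+1).factorial : ℝ) := by
  have hterm : ∀ r : ℕ,
      (-1:ℝ)^(r-n) * (r.choose n) * (Nv.descFactorial r : ℝ) / (r.factorial : ℝ)
        = (-1:ℝ)^(r-n) * (r.choose n) * (Nv.choose r : ℝ) := by
    intro r
    rw [Nat.descFactorial_eq_factorial_mul_choose]
    have : (r.factorial : ℝ) ≠ 0 := by positivity
    push_cast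
    field_simp
  simp only [hterm]
  rw [Nat.descFactorial_eq_factorial_mul_choose]
  have hfac : ((M+1).factorial : ℝ) ≠ 0 := by positivity
  have hZ := abs_sum_alt_choose_le Nv n M h
  have hZ' : |(∑ r ∈ Finset.Icc n M, (-1:ℝ)^(r-n) * (r.choose n) * (Nv.choose r))
      - (if Nv = n then 1 else 0)|
      ≤ ((M+1).choose n : ℝ) * (Nv.choose (M+1) : ℝ) := by
    calc |(∑ r ∈ Finset.Icc n M, (-1:ℝ)^(r-n) * (r.choose n) * (Nv.choose r))
        - (if Nv = n then 1 else 0)|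
        = |((∑ r ∈ Finset.Icc n M, (-1:ℤ)^(r-n) * (r.choose n) * (Nv.choose r)
            - (if Nv = n then 1 else 0) : ℤ) : ℝ)| := by
          congr 1
          push_cast
          split <;> push_cast <;> ring
      _ = |(∑ r ∈ Finset.Icc n M, (-1:ℤ)^(r-n) * (r.choose n) * (Nv.choose r)
            - (if Nv = n then 1 else 0) : ℤ)| := by rw [Int.cast_abs]
      _ ≤ (((M+1).choose n : ℤ) * (Nv.choose (M+1) : ℤ) : ℝ) := by exact_mod_cast hZ
      _ = ((M+1).choose n : ℝ) * (Nv.choose (M+1) : ℝ) := by push_cast; ring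
  rw [abs_sub_comm]
  calc |(∑ r ∈ Finset.Icc n M, (-1:ℝ)^(r-n) * (r.choose n) * (Nv.choose r))
      - (if Nv = n then 1 else 0)|
      ≤ ((M+1).choose n : ℝ) * (Nv.choose (M+1) : ℝ) := hZ'
    _ = ((M+1).choose n : ℝ) * (((M+1).factorial * Nv.choose (M+1) : ℕ) : ℝ)
          / ((M+1).factorial : ℝ) := by push_cast; field_simp

/-- If each `|a j| ≤ 1` and `|a j - b j| ≤ e j`, then the product difference is
bounded by the sum over nonempty subsets of products of errors. -/
lemma abs_prod_sub_prod_le {ι : Type*} [Fintype ι] [DecidableEq ι] (a b e : ι → ℝ)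
    (ha : ∀ j, |a j| ≤ 1) (hab : ∀ j, |a j - b j| ≤ e j) :
    |(∏ j, a j) - ∏ j, b j|
      ≤ ∑ S ∈ (Finset.univ : Finset ι).powerset.erase ∅, ∏ j ∈ S, e j := by
  have expand : (∏ j, b j)
      = ∑ S ∈ (Finset.univ : Finset ι).powerset,
          (∏ j ∈ S, (b j - a j)) * ∏ j ∈ Finset.univ \ S, a j := by
    rw [← Finset.prod_add]
    congr 1
    ext j
    ring
  have hsplit : ∑ S ∈ (Finset.univ : Finset ι).powerset,
        (∏ j ∈ S, (b j - a j)) * ∏ j ∈ Finset.univ \ S, a j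
      = (∏ j, a j) + ∑ S ∈ (Finset.univ : Finset ι).powerset.erase ∅,
          (∏ j ∈ S, (b j - a j)) * ∏ j ∈ Finset.univ \ S, a j := by
    rw [← Finset.add_sum_erase _ _ (Finset.empty_mem_powerset _)]
    simp
  rw [expand, hsplit, sub_add_cancel_left, abs_neg]
  calc |∑ S ∈ (Finset.univ : Finset ι).powerset.erase ∅,
          (∏ j ∈ S, (b j - a j)) * ∏ j ∈ Finset.univ \ S, a j|
      ≤ ∑ S ∈ (Finset.univ : Finset ι).powerset.erase ∅,
          |(∏ j ∈ S, (b j - a j)) * ∏ j ∈ Finset.univ \ S, a j| :=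
        Finset.abs_sum_le_sum_abs _ _
    _ ≤ ∑ S ∈ (Finset.univ : Finset ι).powerset.erase ∅, ∏ j ∈ S, e j := by
        apply Finset.sum_le_sum
        intro S _
        rw [abs_mul, Finset.abs_prod, Finset.abs_prod]
        calc (∏ j ∈ S, |b j - a j|) * ∏ j ∈ Finset.univ \ S, |a j|
            ≤ (∏ j ∈ S, e j) * 1 := by
              apply mul_le_mul
              · exact Finset.prod_le_prod (fun j _ => abs_nonneg _)
                  (fun j _ => by rw [abs_sub_comm]; exact hab j)
              · exact Finset.prod_le_one (fun j _ => abs_nonneg _) (fun j _ => ha j)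
              · exact Finset.prod_nonneg (fun j _ => abs_nonneg _)
              · exact Finset.prod_nonneg fun j _ =>
                  le_trans (abs_nonneg _) (by rw [abs_sub_comm]; exact hab j)
          _ = ∏ j ∈ S, e j := mul_one _

open Filter in
lemma tendsto_partial_exp (x : ℝ) :
    Tendsto (fun m => ∑ s ∈ Finset.range m, x ^ s / (s.factorial : ℝ))
      atTop (nhds (Real.exp x)) := by
  have h := (Real.summable_pow_div_factorial x).hasSum.tendsto_sum_nat
  have he : Real.exp x = ∑' n : ℕ, x ^ n / (n.factorial : ℝ) := by
    rw [Real.exp_eq_exp_ℝ, NormedSpace.exp_eq_tsum_div]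
  rwa [← he] at h

open Filter in
/-- The truncated alternating sum converges to the Poisson probability. -/
lemma tendsto_alt_sum_poisson (x : ℝ) (n : ℕ) :
    Tendsto (fun M => ∑ r ∈ Finset.Icc n M,
        (-1:ℝ)^(r-n) * (r.choose n) * x ^ r / (r.factorial : ℝ))
      atTop (nhds (x ^ n * Real.exp (-x) / (n.factorial : ℝ))) := by
  have key : ∀ M, n ≤ M →
      (∑ r ∈ Finset.Icc n M, (-1:ℝ)^(r-n) * (r.choose n) * x ^ r / (r.factorial : ℝ))
        = (x ^ n / (n.factorial : ℝ)) *
            ∑ s ∈ Finset.range (M - n + 1), (-x) ^ s / (s.factorial : ℝ) := by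
    intro M hM
    rw [Finset.mul_sum]
    rw [show Finset.Icc n M = Finset.map ⟨fun s => n + s, add_right_injective n⟩
        (Finset.range (M - n + 1)) from ?_]
    · rw [Finset.sum_map]
      apply Finset.sum_congr rfl
      intro s _
      simp only [Function.Embedding.coeFn_mk]
      have hfac : ((n+s).factorial : ℝ) = ((n+s).choose n : ℝ) * n.factorial * s.factorial := by
        rw_mod_cast [← Nat.choose_mul_factorial_mul_factorial (Nat.le_add_right n s)]
        congr 2
        omega
      have hch : (0:ℝ) < ((n+s).choose n : ℝ) := by
        exact_mod_cast Nat.choose_pos (Nat.le_add_right n s)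
      have h1 : (0:ℝ) < (n.factorial : ℝ) := by positivity
      have h2 : (0:ℝ) < (s.factorial : ℝ) := by positivity
      rw [show n + s - n = s from by omega, hfac]
      rw [neg_pow, pow_add]
      field_simp
      ring
    · ext r
      simp only [Finset.mem_Icc, Finset.mem_map, Finset.mem_range,
        Function.Embedding.coeFn_mk]
      constructor
      · rintro ⟨h1, h2⟩; exact ⟨r - n, by omega, by omega⟩
      · rintro ⟨s, hs, rfl⟩; omega
  have hlim : Tendsto (fun M => (x ^ n / (n.factorial : ℝ)) *
      ∑ s ∈ Finset.range (M - n + 1), (-x) ^ s / (s.factorial : ℝ))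
      atTop (nhds (x ^ n * Real.exp (-x) / (n.factorial : ℝ))) := by
    have h1 : Tendsto (fun M : ℕ => M - n + 1) atTop atTop := by
      apply tendsto_atTop_atTop.2
      intro b
      exact ⟨b + n, fun a ha => by omega⟩
    have h2 := (tendsto_partial_exp (-x)).comp h1
    have := h2.const_mul (x ^ n / (n.factorial : ℝ))
    convert this using 2
    · rfl
    · ring
  apply hlim.congr'
  filter_upwards [eventually_ge_atTop n] with M hM
  exact (key M hM).symm

open Filter in
lemma tendsto_choose_pow_div_factorial (x : ℝ) (n : ℕ) :
    Tendsto (fun M => ((M+1).choose n : ℝ) * x ^ (M+1) / ((M+1).factorial : ℝ))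
      atTop (nhds 0) := by
  have h1 : Tendsto (fun M : ℕ => M + 1 - n) atTop atTop :=
    tendsto_atTop_atTop.2 fun b => ⟨b + n, fun a ha => by omega⟩
  have h2 := (FloorSemiring.tendsto_pow_div_factorial_atTop (K := ℝ) x).comp h1
  have h3 := h2.const_mul (x ^ n / (n.factorial : ℝ))
  rw [mul_zero] at h3
  apply h3.congr'
  filter_upwards [eventually_ge_atTop n] with M hM
  have hfac : ((M+1).factorial : ℝ)
      = ((M+1).choose n : ℝ) * n.factorial * (M+1-n).factorial := by
    rw_mod_cast [← Nat.choose_mul_factorial_mul_factorial (show n ≤ M + 1 by omega)]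
  have hch : (0:ℝ) < ((M+1).choose n : ℝ) := by
    exact_mod_cast Nat.choose_pos (show n ≤ M + 1 by omega)
  have h1' : (0:ℝ) < (n.factorial : ℝ) := by positivity
  have h2' : (0:ℝ) < ((M+1-n).factorial : ℝ) := by positivity
  simp only [Function.comp_apply]
  rw [hfac, show x ^ (M+1) = x ^ n * x ^ (M+1-n) from by rw [← pow_add]; congr 1; omega]
  field_simp

/-- The per-measure Bonferroni sandwich bound. -/
theorem key_bound {Ω : Type*} [MeasurableSpace Ω] (P : Measure Ω) [IsProbabilityMeasure P]
    (k : ℕ) (N : Fin k → Ω → ℕ) (hN : ∀ j, Measurable (N j)) (n : Fin k → ℕ) (M : ℕ)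
    (hMn : ∀ j, n j ≤ M)
    (hint : ∀ r : Fin k → ℕ, (∀ j, r j ≤ M + 1) →
      Integrable (fun ω => ∏ j, (Nat.descFactorial (N j ω) (r j) : ℝ)) P) :
    |(P {ω | ∀ j, N j ω = n j}).toReal
        - ∑ x ∈ Fintype.piFinset (fun j => Finset.Icc (n j) M),
            (∏ j, ((-1:ℝ)^(x j - n j) * ((x j).choose (n j)) / ((x j).factorial : ℝ)))
              * ∫ ω, ∏ j, (Nat.descFactorial (N j ω) (x j) : ℝ) ∂P|
      ≤ ∑ S ∈ (Finset.univ : Finset (Fin k)).powerset.erase ∅,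
          (∏ j ∈ S, (((M+1).choose (n j) : ℝ) / ((M+1).factorial : ℝ)))
            * ∫ ω, ∏ j, (Nat.descFactorial (N j ω) (if j ∈ S then M+1 else 0) : ℝ) ∂P := by
  classical
  set s : Set Ω := {ω | ∀ j, N j ω = n j} with hs_def
  have hms : MeasurableSet s := by
    have : s = ⋂ j, (N j) ⁻¹' {n j} := by ext ω; simp [hs_def, Set.mem_iInter]
    rw [this]
    exact MeasurableSet.iInter fun j => hN j (measurableSet_singleton _)
  -- the three families of functions
  set a : Fin k → Ω → ℝ := fun j ω => if N j ω = n j then 1 else 0 with ha_def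
  set b : Fin k → Ω → ℝ := fun j ω => ∑ r ∈ Finset.Icc (n j) M,
      (-1:ℝ)^(r - n j) * (r.choose (n j)) * (Nat.descFactorial (N j ω) r : ℝ)
        / (r.factorial : ℝ) with hb_def
  set e : Fin k → Ω → ℝ := fun j ω =>
      (((M+1).choose (n j) : ℝ)) * (Nat.descFactorial (N j ω) (M+1) : ℝ)
        / ((M+1).factorial : ℝ) with he_def
  -- ∏ a as an indicator
  have haprod : (fun ω => ∏ j, a j ω) = s.indicator (fun _ => (1:ℝ)) := by
    funext ω
    by_cases h : ∀ j, N j ω = n j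
    · have hω : ω ∈ s := h
      rw [Set.indicator_of_mem hω]
      exact Finset.prod_eq_one fun j _ => by simp [ha_def, h j]
    · have hω : ω ∉ s := h
      rw [Set.indicator_of_notMem hω]
      push_neg at h
      obtain ⟨j, hj⟩ := h
      exact Finset.prod_eq_zero (Finset.mem_univ j) (by simp [ha_def, hj])
  have hIa : Integrable (fun ω => ∏ j, a j ω) P := by
    rw [haprod]; exact (integrable_const 1).indicator hms
  have hInta : ∫ ω, ∏ j, a j ω ∂P = (P s).toReal := by
    rw [haprod]
    exact integral_indicator_one hms
  -- expansion of ∏ b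
  have hbexp : (fun ω => ∏ j, b j ω)
      = fun ω => ∑ x ∈ Fintype.piFinset (fun j => Finset.Icc (n j) M),
          (∏ j, ((-1:ℝ)^(x j - n j) * ((x j).choose (n j)) / ((x j).factorial : ℝ)))
            * ∏ j, (Nat.descFactorial (N j ω) (x j) : ℝ) := by
    funext ω
    rw [hb_def]
    rw [Finset.prod_univ_sum]
    apply Finset.sum_congr rfl
    intro x _
    rw [← Finset.prod_mul_distrib]
    exact Finset.prod_congr rfl fun j _ => by ring
  have hxle : ∀ x ∈ Fintype.piFinset (fun j => Finset.Icc (n j) M), ∀ j, x j ≤ M + 1 := by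
    intro x hx j
    have := (Fintype.mem_piFinset.1 hx) j
    rw [Finset.mem_Icc] at this
    omega
  have hIb : Integrable (fun ω => ∏ j, b j ω) P := by
    rw [hbexp]
    exact integrable_finset_sum _ fun x hx => ((hint x (hxle x hx)).const_mul _)
  have hIntb : ∫ ω, ∏ j, b j ω ∂P
      = ∑ x ∈ Fintype.piFinset (fun j => Finset.Icc (n j) M),
          (∏ j, ((-1:ℝ)^(x j - n j) * ((x j).choose (n j)) / ((x j).factorial : ℝ)))
            * ∫ ω, ∏ j, (Nat.descFactorial (N j ω) (x j) : ℝ) ∂P := by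
    rw [hbexp, integral_finset_sum _ fun x hx => ((hint x (hxle x hx)).const_mul _)]
    exact Finset.sum_congr rfl fun x hx => integral_const_mul _ _
  -- the error function
  have heexp : ∀ S : Finset (Fin k), (fun ω => ∏ j ∈ S, e j ω)
      = fun ω => (∏ j ∈ S, (((M+1).choose (n j) : ℝ) / ((M+1).factorial : ℝ)))
          * ∏ j, (Nat.descFactorial (N j ω) (if j ∈ S then M+1 else 0) : ℝ) := by
    intro S
    funext ω
    have h1 : ∏ j ∈ S, (Nat.descFactorial (N j ω) (M+1) : ℝ)
        = ∏ j, (Nat.descFactorial (N j ω) (if j ∈ S then M+1 else 0) : ℝ) := by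
      rw [Finset.prod_congr rfl (fun j hj =>
        (by rw [if_pos hj] : (Nat.descFactorial (N j ω) (M+1) : ℝ)
            = (Nat.descFactorial (N j ω) (if j ∈ S then M+1 else 0) : ℝ)))]
      exact Finset.prod_subset (Finset.subset_univ S) fun j _ hj => by
        simp [hj, Nat.descFactorial]
    rw [← h1, ← Finset.prod_mul_distrib]
    exact Finset.prod_congr rfl fun j _ => by rw [he_def]; ring
  have hIe : ∀ S ∈ (Finset.univ : Finset (Fin k)).powerset.erase ∅,
      Integrable (fun ω => ∏ j ∈ S, e j ω) P := by
    intro S _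
    rw [heexp S]
    exact (hint _ (fun j => by split <;> omega)).const_mul _
  have hInte : ∫ ω, ∑ S ∈ (Finset.univ : Finset (Fin k)).powerset.erase ∅,
        ∏ j ∈ S, e j ω ∂P
      = ∑ S ∈ (Finset.univ : Finset (Fin k)).powerset.erase ∅,
          (∏ j ∈ S, (((M+1).choose (n j) : ℝ) / ((M+1).factorial : ℝ)))
            * ∫ ω, ∏ j, (Nat.descFactorial (N j ω) (if j ∈ S then M+1 else 0) : ℝ) ∂P := by
    rw [integral_finset_sum _ hIe]
    refine Finset.sum_congr rfl fun S hS => ?_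
    rw [heexp S]
    exact integral_const_mul _ _
  -- pointwise bound
  have hpt : ∀ ω, |(∏ j, a j ω) - ∏ j, b j ω|
      ≤ ∑ S ∈ (Finset.univ : Finset (Fin k)).powerset.erase ∅, ∏ j ∈ S, e j ω := by
    intro ω
    apply abs_prod_sub_prod_le
    · intro j
      by_cases h : N j ω = n j <;> simp [ha_def, h]
    · intro j
      exact abs_sum_alt_descFactorial_le (N j ω) (n j) M (hMn j)
  -- assembling
  rw [← hInta, ← hIntb, ← hInte, ← integral_sub hIa hIb]
  calc |∫ ω, ((∏ j, a j ω) - ∏ j, b j ω) ∂P|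
      ≤ ∫ ω, |(∏ j, a j ω) - ∏ j, b j ω| ∂P := by
        simpa [Real.norm_eq_abs] using
          norm_integral_le_integral_norm (fun ω => (∏ j, a j ω) - ∏ j, b j ω) (μ := P)
    _ ≤ ∫ ω, ∑ S ∈ (Finset.univ : Finset (Fin k)).powerset.erase ∅, ∏ j ∈ S, e j ω ∂P := by
        apply integral_mono ((hIa.sub hIb).abs) (integrable_finset_sum _ hIe) hpt

/-- The multivariate method of moments: convergence of all joint factorial moments
to `∏ λⱼ^{rⱼ}` implies joint convergence to independent Poisson distributions. -/
theorem method_of_moments_multivariate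
    {Ω : ℕ → Type*} [∀ i, MeasurableSpace (Ω i)]
    (P : ∀ i, Measure (Ω i)) [∀ i, IsProbabilityMeasure (P i)]
    (k : ℕ) (N : ∀ i, Fin k → Ω i → ℕ)
    (hN : ∀ i j, Measurable (N i j))
    (lam : Fin k → ℝ) (hlam : ∀ j, 0 < lam j)
    (hmom : ∀ r : Fin k → ℕ,
      Tendsto
        (fun i => ∫ ω, ∏ j, (Nat.descFactorial (N i j ω) (r j) : ℝ) ∂(P i))
        atTop (nhds (∏ j, lam j ^ (r j)))) :
    ∀ n : Fin k → ℕ,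
      Tendsto (fun i => ((P i) {ω | ∀ j, N i j ω = n j}).toReal) atTop
        (nhds (∏ j, lam j ^ (n j) * Real.exp (-lam j) / Nat.factorial (n j))) := by
  intro n
  classical
  -- notation for the M-indexed limit objects
  set aM : ℕ → ℝ := fun M => ∏ j, ∑ r ∈ Finset.Icc (n j) M,
      (-1:ℝ)^(r - n j) * (r.choose (n j)) * lam j ^ r / (r.factorial : ℝ) with haM_def
  set epsM : ℕ → ℝ := fun M => ∑ S ∈ (Finset.univ : Finset (Fin k)).powerset.erase ∅,
      ∏ j ∈ S, (((M+1).choose (n j) : ℝ) * lam j ^ (M+1) / ((M+1).factorial : ℝ)) with hepsM_def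
  have haM : Tendsto aM atTop
      (nhds (∏ j, lam j ^ (n j) * Real.exp (-lam j) / ((n j).factorial : ℝ))) :=
    tendsto_finset_prod _ fun j _ => tendsto_alt_sum_poisson (lam j) (n j)
  have hepsM : Tendsto epsM atTop (nhds 0) := by
    have h1 : Tendsto epsM atTop (nhds (∑ S ∈ (Finset.univ : Finset (Fin k)).powerset.erase ∅,
        ∏ _j ∈ S, (0:ℝ))) :=
      tendsto_finset_sum _ fun S _ =>
        tendsto_finset_prod _ fun j _ => tendsto_choose_pow_div_factorial (lam j) (n j)
    have h2 : (∑ S ∈ (Finset.univ : Finset (Fin k)).powerset.erase ∅, ∏ _j ∈ S, (0:ℝ)) = 0 := by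
      apply Finset.sum_eq_zero
      intro S hS
      have hne : S ≠ ∅ := Finset.ne_of_mem_erase hS
      obtain ⟨j, hj⟩ := Finset.nonempty_iff_ne_empty.2 hne
      exact Finset.prod_eq_zero hj rfl
    rwa [h2] at h1
  rw [Metric.tendsto_atTop]
  intro ε hε
  have hε3 : 0 < ε / 3 := by positivity
  obtain ⟨M₁, hM₁⟩ := (Metric.tendsto_atTop.1 haM) (ε/3) hε3
  obtain ⟨M₂, hM₂⟩ := (Metric.tendsto_atTop.1 hepsM) (ε/3) hε3
  set M : ℕ := max (max M₁ M₂) (Finset.univ.sup n) with hM_def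
  have hMn : ∀ j, n j ≤ M :=
    fun j => le_trans (Finset.le_sup (Finset.mem_univ j)) (le_max_right _ _)
  have haMM : |aM M - ∏ j, lam j ^ (n j) * Real.exp (-lam j) / ((n j).factorial : ℝ)| < ε/3 := by
    have := hM₁ M (le_trans (le_max_left _ _) (le_max_left _ _))
    rwa [Real.dist_eq] at this
  have hepsMM : epsM M < ε/3 := by
    have := hM₂ M (le_trans (le_max_right _ _) (le_max_left _ _))
    rw [Real.dist_eq, sub_zero] at this
    calc epsM M ≤ |epsM M| := le_abs_self _
      _ < ε/3 := this
  -- the i-indexed quantities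
  set A : ℕ → ℝ := fun i => ∑ x ∈ Fintype.piFinset (fun j => Finset.Icc (n j) M),
      (∏ j, ((-1:ℝ)^(x j - n j) * ((x j).choose (n j)) / ((x j).factorial : ℝ)))
        * ∫ ω, ∏ j, (Nat.descFactorial (N i j ω) (x j) : ℝ) ∂(P i) with hA_def
  set B : ℕ → ℝ := fun i => ∑ S ∈ (Finset.univ : Finset (Fin k)).powerset.erase ∅,
      (∏ j ∈ S, (((M+1).choose (n j) : ℝ) / ((M+1).factorial : ℝ)))
        * ∫ ω, ∏ j, (Nat.descFactorial (N i j ω) (if j ∈ S then M+1 else 0) : ℝ) ∂(P i)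
    with hB_def
  -- A converges to aM M
  have hAlim : Tendsto A atTop (nhds (aM M)) := by
    have h1 : Tendsto A atTop (nhds (∑ x ∈ Fintype.piFinset (fun j => Finset.Icc (n j) M),
        (∏ j, ((-1:ℝ)^(x j - n j) * ((x j).choose (n j)) / ((x j).factorial : ℝ)))
          * ∏ j, lam j ^ (x j))) :=
      tendsto_finset_sum _ fun x _ => (hmom x).const_mul _
    have h2 : (∑ x ∈ Fintype.piFinset (fun j => Finset.Icc (n j) M),
        (∏ j, ((-1:ℝ)^(x j - n j) * ((x j).choose (n j)) / ((x j).factorial : ℝ)))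
          * ∏ j, lam j ^ (x j)) = aM M := by
      simp only [haM_def]
      rw [Finset.prod_univ_sum]
      apply Finset.sum_congr rfl
      intro x _
      rw [← Finset.prod_mul_distrib]
      exact Finset.prod_congr rfl fun j _ => by ring
    rwa [h2] at h1
  -- B converges to epsM M
  have hBlim : Tendsto B atTop (nhds (epsM M)) := by
    have h1 : Tendsto B atTop (nhds (∑ S ∈ (Finset.univ : Finset (Fin k)).powerset.erase ∅,
        (∏ j ∈ S, (((M+1).choose (n j) : ℝ) / ((M+1).factorial : ℝ)))
          * ∏ j, lam j ^ (if j ∈ S then M+1 else 0))) :=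
      tendsto_finset_sum _ fun S _ => (hmom _).const_mul _
    have h2 : (∑ S ∈ (Finset.univ : Finset (Fin k)).powerset.erase ∅,
        (∏ j ∈ S, (((M+1).choose (n j) : ℝ) / ((M+1).factorial : ℝ)))
          * ∏ j, lam j ^ (if j ∈ S then M+1 else 0)) = epsM M := by
      simp only [hepsM_def]
      apply Finset.sum_congr rfl
      intro S _
      have h3 : (∏ j, lam j ^ (if j ∈ S then M+1 else 0)) = ∏ j ∈ S, lam j ^ (M+1) := by
        rw [(Finset.prod_subset (Finset.subset_univ S) fun j _ hj => by
          simp [hj]).symm]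
        exact Finset.prod_congr rfl fun j hj => by rw [if_pos hj]
      rw [h3, ← Finset.prod_mul_distrib]
      exact Finset.prod_congr rfl fun j _ => by ring
    rwa [h2] at h1
  -- eventual integrability
  have hev : ∀ᶠ i in atTop, ∀ r ∈ Fintype.piFinset (fun _ : Fin k => Finset.range (M+2)),
      Integrable (fun ω => ∏ j, (Nat.descFactorial (N i j ω) (r j) : ℝ)) (P i) := by
    rw [eventually_all_finset]
    intro r _
    have hpos : 0 < ∏ j, lam j ^ (r j) :=
      Finset.prod_pos fun j _ => pow_pos (hlam j) _
    filter_upwards [(hmom r).eventually (eventually_gt_nhds (half_lt_self hpos))] with i hi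
    by_contra hni
    rw [integral_undef hni] at hi
    linarith
  -- eventual key bound
  have hbound : ∀ᶠ i in atTop,
      |((P i) {ω | ∀ j, N i j ω = n j}).toReal - A i| ≤ B i := by
    filter_upwards [hev] with i hi
    exact key_bound (P i) k (N i) (hN i) n M hMn fun r hr =>
      hi r (Fintype.mem_piFinset.2 fun j => Finset.mem_range.2 (by have := hr j; omega))
  have hAev : ∀ᶠ i in atTop, |A i - aM M| < ε/3 := by
    filter_upwards [Metric.tendsto_nhds.1 hAlim (ε/3) hε3] with i hi
    rwa [Real.dist_eq] at hi
  have hBev : ∀ᶠ i in atTop, B i < ε/3 := hBlim.eventually_lt_const hepsMM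
  have hfinal : ∀ᶠ i in atTop,
      dist (((P i) {ω | ∀ j, N i j ω = n j}).toReal)
        (∏ j, lam j ^ (n j) * Real.exp (-lam j) / ((n j).factorial : ℝ)) < ε := by
    filter_upwards [hbound, hAev, hBev] with i h1 h2 h3
    rw [Real.dist_eq]
    calc |((P i) {ω | ∀ j, N i j ω = n j}).toReal
          - ∏ j, lam j ^ (n j) * Real.exp (-lam j) / ((n j).factorial : ℝ)|
        ≤ |((P i) {ω | ∀ j, N i j ω = n j}).toReal - A i| + |A i - aM M|
            + |aM M - ∏ j, lam j ^ (n j) * Real.exp (-lam j) / ((n j).factorial : ℝ)| := by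
          calc |((P i) {ω | ∀ j, N i j ω = n j}).toReal
                - ∏ j, lam j ^ (n j) * Real.exp (-lam j) / ((n j).factorial : ℝ)|
              ≤ |((P i) {ω | ∀ j, N i j ω = n j}).toReal - aM M|
                  + |aM M - ∏ j, lam j ^ (n j) * Real.exp (-lam j) / ((n j).factorial : ℝ)| :=
                abs_sub_le _ _ _
            _ ≤ |((P i) {ω | ∀ j, N i j ω = n j}).toReal - A i| + |A i - aM M|
                  + |aM M - ∏ j, lam j ^ (n j) * Real.exp (-lam j) / ((n j).factorial : ℝ)| := by
                have := abs_sub_le (((P i) {ω | ∀ j, N i j ω = n j}).toReal) (A i) (aM M)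
                linarith
      _ < ε := by linarith
  obtain ⟨N₀, hN₀⟩ := eventually_atTop.1 hfinal
  exact ⟨N₀, hN₀⟩
end
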